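/- (Univariate range enclosure.) Let n ∈ ℕ, let a_0, …, a_n ∈ ℝ, let p(x) = ∑_{i=0}^{n} a_i x^i, and let d̲ < d̄ be reals. Define b_k = ∑_{j=0}^{k} ((k.choose j : ℝ)/(n.choose j)) · (d̄ − d̲)^j · ∑_{i=j}^{n} ((i.choose j : ℝ)) · d̲^(i−j) · a_i for 0 ≤ k ≤ n. Then for every x ∈ [d̲, d̄], (min_{0 ≤ k ≤ n} b_k) ≤ p(x) ≤ (max_{0 ≤ k ≤ n} b_k). -/

import Mathlib

open Finset

/-- Univariate Bernstein coefficients of the polynomial `∑ a_i x^i` over `[d̲, d̄]`. -/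
noncomputable def bernCoeff1 (n : ℕ) (a : ℕ → ℝ) (dlo dhi : ℝ) (k : ℕ) : ℝ :=
  ∑ j ∈ Finset.range (k + 1),
    ((k.choose j : ℝ) / (n.choose j : ℝ)) * (dhi - dlo) ^ j *
      ∑ i ∈ Finset.Icc j n, (i.choose j : ℝ) * dlo ^ (i - j) * a i

private lemma ber_key (n j : ℕ) (hj : j ≤ n) (t : ℝ) :
    ∑ k ∈ range (n + 1), (k.choose j : ℝ) * ((n.choose k : ℝ) * t ^ k * (1 - t) ^ (n - k))
      = (n.choose j : ℝ) * t ^ j := by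
  have hsub : Finset.Ico j (n + 1) ⊆ range (n + 1) := by
    intro k hk; simp only [mem_Ico] at hk; simp [hk.2]
  rw [← Finset.sum_subset hsub (by
    intro k hk hk'
    simp only [mem_range, mem_Ico, not_and, not_le] at hk hk'
    have : k < j := by omega
    simp [Nat.choose_eq_zero_of_lt this])]
  rw [Finset.sum_Ico_eq_sum_range]
  have hone : (1 : ℝ) = ∑ m ∈ range (n - j + 1), t ^ m * (1 - t) ^ (n - j - m) * ((n - j).choose m : ℝ) := by
    have := add_pow t (1 - t) (n - j)
    simpa using this
  calc ∑ i ∈ range (n + 1 - j),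
        ((j + i).choose j : ℝ) * ((n.choose (j + i) : ℝ) * t ^ (j + i) * (1 - t) ^ (n - (j + i)))
      = ∑ i ∈ range (n - j + 1),
        (n.choose j : ℝ) * t ^ j * (t ^ i * (1 - t) ^ (n - j - i) * ((n - j).choose i : ℝ)) := by
        have hr : n + 1 - j = n - j + 1 := by omega
        rw [hr]
        refine Finset.sum_congr rfl fun i hi => ?_
        simp only [mem_range] at hi
        have hji : j + i ≤ n := by omega
        have hc : (n.choose (j + i) : ℕ) * (j + i).choose j = n.choose j * (n - j).choose i := by
          have := Nat.choose_mul (n := n) (Nat.le_add_right j i)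
          simpa using this
        have hc' : ((n.choose (j + i) : ℝ)) * ((j + i).choose j : ℝ) = (n.choose j : ℝ) * ((n - j).choose i : ℝ) := by
          exact_mod_cast congrArg (Nat.cast : ℕ → ℝ) hc
        have hpow : t ^ (j + i) = t ^ j * t ^ i := pow_add t j i
        have hn : n - (j + i) = n - j - i := by omega
        rw [hpow, hn]
        linear_combination (t ^ j * t ^ i * (1 - t) ^ (n - j - i)) * hc'
    _ = (n.choose j : ℝ) * t ^ j := by
        rw [← Finset.mul_sum, ← hone, mul_one]

private lemma ber_expand (n : ℕ) (a : ℕ → ℝ) (dlo dhi : ℝ) (hd : dlo < dhi) (t : ℝ) :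
    ∑ k ∈ range (n + 1), bernCoeff1 n a dlo dhi k *
        ((n.choose k : ℝ) * t ^ k * (1 - t) ^ (n - k))
      = ∑ i ∈ range (n + 1), a i * (dlo + (dhi - dlo) * t) ^ i := by
  set s := dhi - dlo with hs
  set c : ℕ → ℝ := fun j => ∑ i ∈ Finset.Icc j n, (i.choose j : ℝ) * dlo ^ (i - j) * a i with hc
  have hb : ∀ k ∈ range (n + 1), bernCoeff1 n a dlo dhi k =
      ∑ j ∈ range (n + 1), ((k.choose j : ℝ) / (n.choose j : ℝ)) * s ^ j * c j := by
    intro k hk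
    simp only [mem_range] at hk
    rw [bernCoeff1]
    refine Finset.sum_subset (by intro j hj; simp only [mem_range] at *; omega) ?_
    intro j hj hj'
    simp only [mem_range, not_lt] at hj hj'
    have : k < j := by omega
    simp [Nat.choose_eq_zero_of_lt this]
  calc ∑ k ∈ range (n + 1), bernCoeff1 n a dlo dhi k * ((n.choose k : ℝ) * t ^ k * (1 - t) ^ (n - k))
      = ∑ k ∈ range (n + 1), ∑ j ∈ range (n + 1),
          ((k.choose j : ℝ) / (n.choose j : ℝ)) * s ^ j * c j *
            ((n.choose k : ℝ) * t ^ k * (1 - t) ^ (n - k)) := by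
        refine Finset.sum_congr rfl fun k hk => ?_
        rw [hb k hk, Finset.sum_mul]
    _ = ∑ j ∈ range (n + 1), ∑ k ∈ range (n + 1),
          ((k.choose j : ℝ) / (n.choose j : ℝ)) * s ^ j * c j *
            ((n.choose k : ℝ) * t ^ k * (1 - t) ^ (n - k)) := Finset.sum_comm
    _ = ∑ j ∈ range (n + 1), (s * t) ^ j * c j := by
        refine Finset.sum_congr rfl fun j hj => ?_
        simp only [mem_range] at hj
        have hjn : j ≤ n := by omega
        have hch : (0 : ℝ) < (n.choose j : ℝ) := by
          exact_mod_cast Nat.choose_pos hjn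
        have : ∑ k ∈ range (n + 1),
            ((k.choose j : ℝ) / (n.choose j : ℝ)) * s ^ j * c j *
              ((n.choose k : ℝ) * t ^ k * (1 - t) ^ (n - k))
            = (s ^ j * c j / (n.choose j : ℝ)) *
              ∑ k ∈ range (n + 1), (k.choose j : ℝ) * ((n.choose k : ℝ) * t ^ k * (1 - t) ^ (n - k)) := by
          rw [Finset.mul_sum]
          exact Finset.sum_congr rfl fun k _ => by ring
        rw [this, ber_key n j hjn t, mul_pow]
        field_simp
    _ = ∑ i ∈ range (n + 1), a i * (dlo + s * t) ^ i := by
        have expand : ∀ i ∈ range (n + 1), a i * (dlo + s * t) ^ i =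
            ∑ j ∈ range (n + 1), (i.choose j : ℝ) * dlo ^ (i - j) * a i * (s * t) ^ j := by
          intro i hi
          simp only [mem_range] at hi
          rw [add_comm dlo (s * t), add_pow]
          rw [Finset.mul_sum]
          rw [← Finset.sum_subset (by intro j hj; simp only [mem_range] at *; omega : range (i+1) ⊆ range (n+1))
            (by intro j hj hj'; simp only [mem_range, not_lt] at hj hj'
                have : i < j := by omega
                simp [Nat.choose_eq_zero_of_lt this])]
          exact Finset.sum_congr rfl fun j _ => by ring
        rw [Finset.sum_congr rfl expand, Finset.sum_comm]
        refine Finset.sum_congr rfl fun j hj => ?_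
        simp only [mem_range] at hj
        simp only [hc]
        have : ∑ i ∈ Finset.Icc j n, (i.choose j : ℝ) * dlo ^ (i - j) * a i
            = ∑ i ∈ range (n + 1), (i.choose j : ℝ) * dlo ^ (i - j) * a i := by
          refine Finset.sum_subset (by intro i hi; simp only [Finset.mem_Icc, mem_range] at *; omega) ?_
          intro i hi hi'
          simp only [mem_range, Finset.mem_Icc, not_and, not_le] at hi hi'
          have : i < j := by omega
          simp [Nat.choose_eq_zero_of_lt this]
        rw [this, Finset.mul_sum]
        exact Finset.sum_congr rfl fun i _ => by ring

/-- Univariate range enclosure: on `[d̲, d̄]`, the polynomial is bounded between the minimum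
and maximum of its Bernstein coefficients. -/
theorem univariate_bernstein_range_enclosure (n : ℕ) (a : ℕ → ℝ) (dlo dhi : ℝ)
    (hd : dlo < dhi) (x : ℝ) (hx : dlo ≤ x ∧ x ≤ dhi) :
    (Finset.range (n + 1)).inf' Finset.nonempty_range_add_one (bernCoeff1 n a dlo dhi)
        ≤ ∑ i ∈ Finset.range (n + 1), a i * x ^ i ∧
    ∑ i ∈ Finset.range (n + 1), a i * x ^ i
        ≤ (Finset.range (n + 1)).sup' Finset.nonempty_range_add_one (bernCoeff1 n a dlo dhi) := by
  obtain ⟨hx1, hx2⟩ := hx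
  set s := dhi - dlo with hs
  have hspos : 0 < s := by simp [hs]; linarith
  set t := (x - dlo) / s with ht
  have ht0 : 0 ≤ t := div_nonneg (by linarith) hspos.le
  have ht1 : t ≤ 1 := by
    rw [ht, div_le_one hspos]; simp [hs]; linarith
  have hxt : x = dlo + s * t := by
    rw [ht]; field_simp; ring
  set w : ℕ → ℝ := fun k => (n.choose k : ℝ) * t ^ k * (1 - t) ^ (n - k) with hw
  have hwnn : ∀ k, 0 ≤ w k := fun k =>
    mul_nonneg (mul_nonneg (Nat.cast_nonneg _) (pow_nonneg ht0 _)) (pow_nonneg (by linarith) _)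
  have hwsum : ∑ k ∈ range (n + 1), w k = 1 := by
    have := ber_key n 0 (Nat.zero_le n) t
    simpa [hw] using this
  have hrepr : ∑ i ∈ range (n + 1), a i * x ^ i
      = ∑ k ∈ range (n + 1), bernCoeff1 n a dlo dhi k * w k := by
    rw [hxt]
    exact (ber_expand n a dlo dhi hd t).symm
  rw [hrepr]
  constructor
  · calc (range (n + 1)).inf' Finset.nonempty_range_add_one (bernCoeff1 n a dlo dhi)
        = ∑ k ∈ range (n + 1), (range (n + 1)).inf' Finset.nonempty_range_add_one (bernCoeff1 n a dlo dhi) * w k := by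
          rw [← Finset.mul_sum, hwsum, mul_one]
      _ ≤ ∑ k ∈ range (n + 1), bernCoeff1 n a dlo dhi k * w k := by
          refine Finset.sum_le_sum fun k hk => ?_
          exact mul_le_mul_of_nonneg_right (Finset.inf'_le _ hk) (hwnn k)
  · calc ∑ k ∈ range (n + 1), bernCoeff1 n a dlo dhi k * w k
        ≤ ∑ k ∈ range (n + 1), (range (n + 1)).sup' Finset.nonempty_range_add_one (bernCoeff1 n a dlo dhi) * w k := by
          refine Finset.sum_le_sum fun k hk => ?_
          exact mul_le_mul_of_nonneg_right (Finset.le_sup' _ hk) (hwnn k)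
      _ = (range (n + 1)).sup' Finset.nonempty_range_add_one (bernCoeff1 n a dlo dhi) := by
          rw [← Finset.mul_sum, hwsum, mul_one]
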